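/- Let a = 31207386885274502188173522132023665167365193670823768234185354856354918873864275 and M = 36812852443922071184402498913076070503146229820861211558347078871354783744850778, and for n ∈ ℕ set u_n = F_{3n}/2. Then for every integer x with x ≡ a (mod M) and all k, b ∈ ℕ, one has x² − u_{6+10k} ≠ 11^b and x² − u_{6+10k} ≠ −11^b. -/
import Mathlib


/-- `u n = F_{3n} / 2`, an integer since `F_{3n}` is always even. -/
def u (n : ℕ) : ℤ := (Nat.fib (3 * n) : ℤ) / 2

lemma fib_period_911 (n : ℕ) :
    ((Nat.fib (n + 70) : ℕ) : ZMod 911) = (Nat.fib n : ZMod 911) := by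
  have h := Nat.fib_add 69 n
  have hidx : 69 + n + 1 = n + 70 := by omega
  rw [hidx] at h
  have h69 : ((Nat.fib 69 : ℕ) : ZMod 911) = 1 := by decide
  have h70 : ((Nat.fib 70 : ℕ) : ZMod 911) = 0 := by decide
  rw [h]
  push_cast
  rw [h69, h70]
  ring

lemma fib_period_911_mul (q n : ℕ) :
    ((Nat.fib (n + 70 * q) : ℕ) : ZMod 911) = (Nat.fib n : ZMod 911) := by
  induction q with
  | zero => rfl
  | succ q ih =>
      have : n + 70 * (q + 1) = (n + 70 * q) + 70 := by ring
      rw [this, fib_period_911, ih]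

lemma pow11_period (b : ℕ) : (11 : ZMod 911) ^ b = 11 ^ (b % 26) := by
  conv_lhs => rw [← Nat.div_add_mod b 26]
  rw [pow_add, pow_mul]
  have : (11 : ZMod 911) ^ 26 = 1 := by decide
  rw [this, one_pow, one_mul]

lemma two_mul_u (n : ℕ) : (2 : ℤ) * u n = (Nat.fib (3 * n) : ℤ) := by
  have hdvd : Nat.fib 3 ∣ Nat.fib (3 * n) := Nat.fib_dvd _ _ ⟨n, rfl⟩
  have h2 : (2 : ℤ) ∣ (Nat.fib (3 * n) : ℤ) := by
    exact_mod_cast Int.natCast_dvd_natCast.mpr hdvd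
  exact Int.mul_ediv_cancel' h2

lemma key_911 : ∀ r : Fin 7, ∀ s : Fin 26,
    (2 : ZMod 911) * 257 ^ 2 - (Nat.fib (18 + 30 * r.val) : ZMod 911) ≠ 2 * 11 ^ s.val ∧
    (2 : ZMod 911) * 257 ^ 2 - (Nat.fib (18 + 30 * r.val) : ZMod 911) ≠ -(2 * 11 ^ s.val) := by
  decide

/-- Case 4.3 of the proof of Theorem 1.3: for every integer
`x ≡ a (mod M)` and all `k, b ∈ ℕ`, `x² - u_{6+10k}` is not `±11^b`. -/
theorem sq_sub_u_ne_pm_pow_11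
    (x : ℤ)
    (hx : x ≡ 31207386885274502188173522132023665167365193670823768234185354856354918873864275
      [ZMOD 36812852443922071184402498913076070503146229820861211558347078871354783744850778])
    (k b : ℕ) :
    x ^ 2 - u (6 + 10 * k) ≠ 11 ^ b ∧ x ^ 2 - u (6 + 10 * k) ≠ -(11 ^ b) := by
  -- reduce x mod 911
  have hdvd : (911 : ℤ) ∣ 36812852443922071184402498913076070503146229820861211558347078871354783744850778 := by
    norm_num
  have hx911 : x ≡ 31207386885274502188173522132023665167365193670823768234185354856354918873864275 [ZMOD (911 : ℤ)] :=
    hx.of_dvd hdvd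
  have hxz : (x : ZMod 911) = ((31207386885274502188173522132023665167365193670823768234185354856354918873864275 : ℤ) : ZMod 911) := by
    rw [ZMod.intCast_eq_intCast_iff]
    exact_mod_cast hx911
  have ha : ((31207386885274502188173522132023665167365193670823768234185354856354918873864275 : ℤ) : ZMod 911) = 257 := by
    decide
  rw [ha] at hxz
  -- fib index reduction
  have hidx : 3 * (6 + 10 * k) = (18 + 30 * (k % 7)) + 70 * (3 * (k / 7)) := by
    have := Nat.div_add_mod k 7
    omega
  have hfib : ((Nat.fib (3 * (6 + 10 * k)) : ℕ) : ZMod 911)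
      = (Nat.fib (18 + 30 * (k % 7)) : ZMod 911) := by
    rw [hidx, fib_period_911_mul]
  have hk7 : k % 7 < 7 := Nat.mod_lt _ (by norm_num)
  have hb26 : b % 26 < 26 := Nat.mod_lt _ (by norm_num)
  have key := key_911 ⟨k % 7, hk7⟩ ⟨b % 26, hb26⟩
  constructor
  · intro heq
    have h2 : (2 : ℤ) * x ^ 2 - (Nat.fib (3 * (6 + 10 * k)) : ℤ) = 2 * 11 ^ b := by
      rw [← two_mul_u]; linarith
    have hz := congrArg (fun t : ℤ => (t : ZMod 911)) h2
    push_cast at hz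
    rw [hxz, hfib, pow11_period] at hz
    exact key.1 hz
  · intro heq
    have h2 : (2 : ℤ) * x ^ 2 - (Nat.fib (3 * (6 + 10 * k)) : ℤ) = -(2 * 11 ^ b) := by
      rw [← two_mul_u]; linarith
    have hz := congrArg (fun t : ℤ => (t : ZMod 911)) h2
    push_cast at hz
    rw [hxz, hfib, pow11_period] at hz
    exact key.2 hz
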